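/- Let R be an integral domain and consider the polynomial ring R[u, x₁, x₂, …] in a variable u and countably many variables xᵢ. Let p₁, p₂, … ∈ R[x₁, x₂, …] be polynomials not involving u, and let I be the ideal of R[u, x₁, x₂, …] generated by the elements u·xᵢ + pᵢ for i ≥ 1. Then the elimination ideal I ∩ R[x₁, x₂, …] is equal to the ideal J of R[x₁, x₂, …] generated by the elements xᵢ·pⱼ − xⱼ·pᵢ for i, j ≥ 1. -/

import Mathlib

open MvPolynomial

namespace Stmt1Aux

variable {R : Type*} [CommRing R]

/-- Division by `X j` with remainder given by substituting `X j ↦ 0`. -/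
lemma exists_div (j : ℕ) (f : MvPolynomial ℕ R) :
    ∃ q : MvPolynomial ℕ R,
      f = q * X j + aeval (fun k => if k = j then 0 else X k) f := by
  induction f using MvPolynomial.induction_on with
  | C a => exact ⟨0, by simp⟩
  | add f g hf hg =>
    obtain ⟨q, hq⟩ := hf
    obtain ⟨r, hr⟩ := hg
    exact ⟨q + r, by rw [map_add]; linear_combination hq + hr⟩
  | mul_X f k hf =>
    obtain ⟨q, hq⟩ := hf
    by_cases h : k = j
    · subst h
      exact ⟨f, by rw [map_mul, aeval_X, if_pos rfl, mul_zero, add_zero]⟩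
    · refine ⟨q * X k, ?_⟩
      rw [map_mul, aeval_X, if_neg h]
      linear_combination X k * hq

variable [IsDomain R]

/-- Koszul syzygies: if `∑ h i * X i = 0` then `∑ h i * p i` lies in the ideal
generated by the `X i * p j - X j * p i`. -/
lemma lemA (p : ℕ → MvPolynomial ℕ R) (s : Finset ℕ) (h : ℕ → MvPolynomial ℕ R)
    (hs : (∑ i ∈ s, h i * X i) = 0) :
    (∑ i ∈ s, h i * p i) ∈
      Ideal.span {f : MvPolynomial ℕ R | ∃ i j, f = X i * p j - X j * p i} := by
  induction s using Finset.induction_on generalizing h with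
  | empty => simp
  | insert j s' hj ih =>
    rw [Finset.sum_insert hj] at hs ⊢
    set φ : MvPolynomial ℕ R →ₐ[R] MvPolynomial ℕ R :=
      aeval (fun k => if k = j then 0 else X k) with hφ
    set q : ℕ → MvPolynomial ℕ R := fun i => (exists_div j (h i)).choose with hqdef
    set r : ℕ → MvPolynomial ℕ R := fun i => φ (h i) with hrdef
    have hdiv : ∀ i, h i = q i * X j + r i := fun i => (exists_div j (h i)).choose_spec
    have hr0 : ∑ i ∈ s', r i * X i = 0 := by
      have h2 := congrArg φ hs
      rw [map_add, map_mul, map_sum, map_zero] at h2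
      rw [show φ (X j) = 0 by simp [hφ], mul_zero, zero_add] at h2
      rw [← h2]
      apply Finset.sum_congr rfl
      intro i hi
      rw [map_mul, show φ (X i) = X i by
        simp [hφ, show i ≠ j from fun e => hj (e ▸ hi)]]
    have hhj : h j = -∑ i ∈ s', q i * X i := by
      have expand : ∑ i ∈ s', h i * X i
          = (∑ i ∈ s', q i * X i) * X j + ∑ i ∈ s', r i * X i := by
        rw [Finset.sum_mul, ← Finset.sum_add_distrib]
        exact Finset.sum_congr rfl fun i _ => by linear_combination X i * hdiv i
      have : h j * X j = (-∑ i ∈ s', q i * X i) * X j := by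
        linear_combination hs - expand - hr0
      exact mul_right_cancel₀ (X_ne_zero j) this
    have main : h j * p j + ∑ i ∈ s', h i * p i
        = ∑ i ∈ s', q i * (X j * p i - X i * p j) + ∑ i ∈ s', r i * p i := by
      have e1 : ∑ i ∈ s', h i * p i
          = ∑ i ∈ s', (q i * (X j * p i - X i * p j) + r i * p i + q i * X i * p j) := by
        exact Finset.sum_congr rfl fun i _ => by linear_combination p i * hdiv i
      rw [e1, hhj, Finset.sum_add_distrib, Finset.sum_add_distrib, neg_mul, Finset.sum_mul]
      ring
    rw [main]
    refine Ideal.add_mem _ (Ideal.sum_mem _ fun i _ => Ideal.mul_mem_left _ _ ?_) (ih r hr0)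
    exact Ideal.subset_span ⟨j, i, rfl⟩

lemma Jset_eq (p : ℕ → MvPolynomial ℕ R) :
    {f : MvPolynomial ℕ R | ∃ i j, f = X i * p j - X j * p i}
      = Set.range (fun q : ℕ × ℕ => X q.1 * p q.2 - X q.2 * p q.1) := by
  ext f
  constructor
  · rintro ⟨i, j, rfl⟩; exact ⟨(i, j), rfl⟩
  · rintro ⟨⟨i, j⟩, rfl⟩; exact ⟨i, j, rfl⟩

/-- Syzygies modulo `J`: if `∑ h i * X i ∈ J` then `∑ h i * p i ∈ J`. -/
lemma lemA' (p : ℕ → MvPolynomial ℕ R) (t : Finset ℕ) (h : ℕ → MvPolynomial ℕ R)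
    (H : (∑ i ∈ t, h i * X i) ∈
      Ideal.span {f : MvPolynomial ℕ R | ∃ i j, f = X i * p j - X j * p i}) :
    (∑ i ∈ t, h i * p i) ∈
      Ideal.span {f : MvPolynomial ℕ R | ∃ i j, f = X i * p j - X j * p i} := by
  rw [Jset_eq] at H
  rw [show (Ideal.span (Set.range fun q : ℕ × ℕ => X q.1 * p q.2 - X q.2 * p q.1) :
      Ideal (MvPolynomial ℕ R))
      = Submodule.span (MvPolynomial ℕ R) (Set.range fun q : ℕ × ℕ =>
        X q.1 * p q.2 - X q.2 * p q.1) from rfl,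
    Finsupp.mem_span_range_iff_exists_finsupp] at H
  obtain ⟨cc, hcc⟩ := H
  rw [Finsupp.sum] at hcc
  set T : Finset ℕ := (t ∪ cc.support.image Prod.fst) ∪ cc.support.image Prod.snd with hT
  have htT : t ⊆ T := Finset.Subset.trans Finset.subset_union_left Finset.subset_union_left
  set δ : ℕ → MvPolynomial ℕ R := fun m =>
    ∑ q ∈ cc.support, cc q * ((if q.1 = m then p q.2 else 0) - (if q.2 = m then p q.1 else 0))
    with hδ
  have key : ∀ g : ℕ → MvPolynomial ℕ R,
      ∑ m ∈ T, δ m * g m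
        = ∑ q ∈ cc.support, cc q * (g q.1 * p q.2 - g q.2 * p q.1) := by
    intro g
    simp only [hδ, Finset.sum_mul]
    rw [Finset.sum_comm]
    apply Finset.sum_congr rfl
    intro q hq
    have h1 : q.1 ∈ T := by
      refine Finset.mem_union_left _ (Finset.mem_union_right _ ?_)
      exact Finset.mem_image_of_mem _ hq
    have h2 : q.2 ∈ T := Finset.mem_union_right _ (Finset.mem_image_of_mem _ hq)
    have e : ∀ m, cc q * ((if q.1 = m then p q.2 else 0) - (if q.2 = m then p q.1 else 0)) * g m
        = (if q.1 = m then cc q * (g m * p q.2) else 0)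
          - (if q.2 = m then cc q * (g m * p q.1) else 0) := by
      intro m
      by_cases e1 : q.1 = m <;> by_cases e2 : q.2 = m <;> simp [e1, e2] <;> ring
    simp only [e]
    rw [Finset.sum_sub_distrib, Finset.sum_ite_eq, Finset.sum_ite_eq, if_pos h1, if_pos h2]
    ring
  have claim1 : ∑ m ∈ T, δ m * X m = ∑ i ∈ t, h i * X i := by
    rw [key fun m => X m, ← hcc]
    exact Finset.sum_congr rfl fun q _ => by rw [smul_eq_mul]
  have claim2 : ∑ m ∈ T, δ m * p m = 0 := by
    rw [key fun m => p m]
    exact Finset.sum_eq_zero fun q _ => by ring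
  set h' : ℕ → MvPolynomial ℕ R := fun m => (if m ∈ t then h m else 0) - δ m with hh'
  have extg : ∀ g : ℕ → MvPolynomial ℕ R,
      ∑ m ∈ T, (if m ∈ t then h m else 0) * g m = ∑ m ∈ t, h m * g m := by
    intro g
    rw [← Finset.sum_subset htT (fun m _ hm => by rw [if_neg hm, zero_mul])]
    exact Finset.sum_congr rfl fun m hm => by rw [if_pos hm]
  have hzero : ∑ m ∈ T, h' m * X m = 0 := by
    simp only [hh', sub_mul]
    rw [Finset.sum_sub_distrib, extg fun m => X m, claim1, sub_self]
  have final := lemA p T h' hzero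
  have e2 : ∑ m ∈ T, h' m * p m = ∑ i ∈ t, h i * p i := by
    simp only [hh', sub_mul]
    rw [Finset.sum_sub_distrib, extg fun m => p m, claim2, sub_zero]
  rwa [e2] at final

lemma optC (g : MvPolynomial ℕ R) :
    optionEquivLeft R ℕ (rename (some : ℕ → Option ℕ) g) = Polynomial.C g := by
  have e : ((optionEquivLeft R ℕ).toAlgHom.comp (rename (some : ℕ → Option ℕ)))
      = Polynomial.CAlgHom := by
    apply MvPolynomial.algHom_ext
    intro i
    simp [Polynomial.CAlgHom, optionEquivLeft_X_some]
  exact congrFun (congrArg (fun f => f.toFun) e) g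

lemma Iset_eq (p : ℕ → MvPolynomial ℕ R) :
    {f : MvPolynomial (Option ℕ) R | ∃ i : ℕ,
      f = X none * X (some i) + rename (some : ℕ → Option ℕ) (p i)}
    = Set.range (fun i : ℕ => X none * X (some i) + rename (some : ℕ → Option ℕ) (p i)) := by
  ext f
  constructor
  · rintro ⟨i, rfl⟩; exact ⟨i, rfl⟩
  · rintro ⟨i, rfl⟩; exact ⟨i, rfl⟩

end Stmt1Aux

/-- Elimination lemma: over a domain `R`, in `R[u, x₁, x₂, …]`, the elimination ideal
`I ∩ R[x₁, x₂, …]` of the ideal `I = (u·xᵢ + pᵢ : i)` (with `pᵢ ∈ R[x₁, x₂, …]`)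
is the ideal generated by the elements `xᵢ pⱼ - xⱼ pᵢ`.  The polynomial ring
`R[u, x₁, x₂, …]` is modelled as `MvPolynomial (Option ℕ) R` with `u = X none` and
`xᵢ = X (some i)`; the subring `R[x₁, x₂, …]` is embedded by `rename some`, and the
intersection is expressed as an ideal comap along this (injective) embedding. -/
theorem stmt_1 {R : Type*} [CommRing R] [IsDomain R] (p : ℕ → MvPolynomial ℕ R) :
    Ideal.comap (MvPolynomial.rename (some : ℕ → Option ℕ))
      (Ideal.span {f : MvPolynomial (Option ℕ) R | ∃ i : ℕ,
        f = MvPolynomial.X none * MvPolynomial.X (some i)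
            + MvPolynomial.rename (some : ℕ → Option ℕ) (p i)})
    = Ideal.span {f : MvPolynomial ℕ R | ∃ i j : ℕ,
        f = MvPolynomial.X i * p j - MvPolynomial.X j * p i} := by
  apply le_antisymm
  · -- hard direction
    intro f hf
    rw [Ideal.mem_comap] at hf
    rw [Stmt1Aux.Iset_eq] at hf
    rw [show (Ideal.span (Set.range fun i : ℕ =>
          X none * X (some i) + rename (some : ℕ → Option ℕ) (p i)) :
        Ideal (MvPolynomial (Option ℕ) R))
        = Submodule.span _ _ from rfl,
      Finsupp.mem_span_range_iff_exists_finsupp] at hf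
    obtain ⟨c, hc⟩ := hf
    rw [Finsupp.sum] at hc
    set t : Finset ℕ := c.support with ht
    set d : ℕ → Polynomial (MvPolynomial ℕ R) := fun i => optionEquivLeft R ℕ (c i) with hd
    have E : ∑ i ∈ t, d i * (Polynomial.X * Polynomial.C (X i) + Polynomial.C (p i))
        = Polynomial.C f := by
      have e := congrArg (optionEquivLeft R ℕ) hc
      rw [map_sum, Stmt1Aux.optC] at e
      rw [← e]
      apply Finset.sum_congr rfl
      intro i _
      rw [smul_eq_mul, map_mul, map_add, map_mul, optionEquivLeft_X_none,
        optionEquivLeft_X_some, Stmt1Aux.optC]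
    set J := Ideal.span {f : MvPolynomial ℕ R | ∃ i j, f = X i * p j - X j * p i} with hJ
    have eq1 : ∀ k : ℕ, ∑ i ∈ t, ((d i).coeff k * X i + (d i).coeff (k + 1) * p i) = 0 := by
      intro k
      have h2 := congrArg (fun g => Polynomial.coeff g (k + 1)) E
      simp only [Polynomial.finset_sum_coeff, Polynomial.coeff_C,
        Nat.succ_ne_zero, if_neg, if_false] at h2
      rw [← h2]
      apply Finset.sum_congr rfl
      intro i _
      rw [show d i * (Polynomial.X * Polynomial.C (X i) + Polynomial.C (p i))
          = d i * Polynomial.C (X i) * Polynomial.X + d i * Polynomial.C (p i) by ring]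
      rw [Polynomial.coeff_add, Polynomial.coeff_mul_X, Polynomial.coeff_mul_C,
        Polynomial.coeff_mul_C]
    have eq0 : ∑ i ∈ t, (d i).coeff 0 * p i = f := by
      have h2 := congrArg (fun g => Polynomial.coeff g 0) E
      simp only [Polynomial.finset_sum_coeff, Polynomial.coeff_C_zero] at h2
      rw [← h2]
      apply Finset.sum_congr rfl
      intro i _
      rw [show d i * (Polynomial.X * Polynomial.C (X i) + Polynomial.C (p i))
          = d i * Polynomial.C (X i) * Polynomial.X + d i * Polynomial.C (p i) by ring]
      rw [Polynomial.coeff_add, Polynomial.coeff_mul_X_zero, Polynomial.coeff_mul_C, zero_add]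
    set N : ℕ := t.sup fun i => (d i).natDegree with hN
    have key : ∀ (dd k : ℕ), N < k + dd → (∑ i ∈ t, (d i).coeff k * p i) ∈ J := by
      intro dd
      induction dd with
      | zero =>
        intro k hk
        have hz : ∀ i ∈ t, (d i).coeff k * p i = 0 := by
          intro i hi
          have hle : (d i).natDegree ≤ N := Finset.le_sup (f := fun i => (d i).natDegree) hi
          rw [Polynomial.coeff_eq_zero_of_natDegree_lt (by omega), zero_mul]
        rw [Finset.sum_congr rfl hz, Finset.sum_const_zero]
        exact Ideal.zero_mem _
      | succ dd ih =>
        intro k hk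
        have hk1 : (∑ i ∈ t, (d i).coeff (k + 1) * p i) ∈ J := ih (k + 1) (by omega)
        have hx : (∑ i ∈ t, (d i).coeff k * X i) ∈ J := by
          have e : ∑ i ∈ t, (d i).coeff k * X i = -∑ i ∈ t, (d i).coeff (k + 1) * p i := by
            have e2 := eq1 k
            rw [Finset.sum_add_distrib] at e2
            linear_combination e2
          rw [e]
          exact neg_mem hk1
        exact Stmt1Aux.lemA' p t (fun i => (d i).coeff k) hx
    have := key (N + 1) 0 (by omega)
    rwa [eq0] at this
  · -- easy direction
    rw [Ideal.span_le]
    rintro g ⟨i, j, rfl⟩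
    rw [SetLike.mem_coe, Ideal.mem_comap]
    have h1 : X none * X (some j) + rename (some : ℕ → Option ℕ) (p j) ∈
        Ideal.span {f : MvPolynomial (Option ℕ) R | ∃ i : ℕ,
          f = X none * X (some i) + rename (some : ℕ → Option ℕ) (p i)} :=
      Ideal.subset_span ⟨j, rfl⟩
    have h2 : X none * X (some i) + rename (some : ℕ → Option ℕ) (p i) ∈
        Ideal.span {f : MvPolynomial (Option ℕ) R | ∃ i : ℕ,
          f = X none * X (some i) + rename (some : ℕ → Option ℕ) (p i)} :=
      Ideal.subset_span ⟨i, rfl⟩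
    have e : rename (some : ℕ → Option ℕ) (X i * p j - X j * p i)
        = X (some i) * (X none * X (some j) + rename (some : ℕ → Option ℕ) (p j))
          - X (some j) * (X none * X (some i) + rename (some : ℕ → Option ℕ) (p i)) := by
      rw [map_sub, map_mul, map_mul, rename_X, rename_X]
      ring
    rw [e]
    exact sub_mem (Ideal.mul_mem_left _ _ h1) (Ideal.mul_mem_left _ _ h2)
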